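/- arXiv:2505.13499 — 2 statements merged into one kernel-verified Lean document; each statement's English description precedes it below -/
import Mathlib

section
/- The softmax function softmax : ℝ^c → ℝ^c, softmax(z) = exp(z)/(𝟙ᵀ exp(z)), is Lipschitz continuous with Lipschitz constant 1 with respect to the Euclidean norm. -/
set_option maxHeartbeats 1000000


/-- The softmax function on `ℝ^c`. -/
noncomputable def softmax {c : ℕ} (z : EuclideanSpace ℝ (Fin c)) : EuclideanSpace ℝ (Fin c) :=
  (EuclideanSpace.equiv (Fin c) ℝ).symm (fun i => Real.exp (z i) / ∑ j, Real.exp (z j))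

namespace SoftmaxAux

/-- components of softmax -/
noncomputable def p {c : ℕ} (z : EuclideanSpace ℝ (Fin c)) (i : Fin c) : ℝ :=
  Real.exp (z i) / ∑ j, Real.exp (z j)

lemma key_sum {c : ℕ} (p v : Fin c → ℝ) (hp0 : ∀ i, 0 ≤ p i) (hps : ∑ i, p i ≤ 1) :
    ∑ i, (p i * (v i - ∑ j, p j * v j)) ^ 2 ≤ ∑ i, v i ^ 2 := by
  set m := ∑ j, p j * v j with hm
  have hp1 : ∀ i, p i ≤ 1 := fun i =>
    le_trans (Finset.single_le_sum (fun j _ => hp0 j) (Finset.mem_univ i)) hps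
  have h1 : ∑ i, (p i * (v i - m)) ^ 2 ≤ ∑ i, p i * (v i - m) ^ 2 := by
    apply Finset.sum_le_sum
    intro i _
    have h : (p i * (v i - m)) ^ 2 = p i ^ 2 * (v i - m) ^ 2 := by ring
    rw [h]
    exact mul_le_mul_of_nonneg_right (by nlinarith [hp0 i, hp1 i]) (sq_nonneg _)
  have expand : ∀ i ∈ Finset.univ, p i * (v i - m) ^ 2
      = (p i * v i ^ 2 + m ^ 2 * p i) - 2 * m * (p i * v i) := fun i _ => by ring
  have h2 : ∑ i, p i * (v i - m) ^ 2
      = ((∑ i, p i * v i ^ 2) + m ^ 2 * ∑ i, p i) - 2 * m * m := by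
    rw [Finset.sum_congr rfl expand, Finset.sum_sub_distrib, Finset.sum_add_distrib,
      ← Finset.mul_sum, ← Finset.mul_sum, ← hm]
  have h3 : ∑ i, p i * v i ^ 2 ≤ ∑ i, v i ^ 2 :=
    Finset.sum_le_sum fun i _ => mul_le_of_le_one_left (sq_nonneg _) (hp1 i)
  have h4 : m ^ 2 * ∑ i, p i ≤ m ^ 2 := mul_le_of_le_one_right (sq_nonneg m) hps
  nlinarith [sq_nonneg m]

/-- The Jacobian of softmax at `z`, as a continuous linear map. -/
noncomputable def D {c : ℕ} (z : EuclideanSpace ℝ (Fin c)) :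
    EuclideanSpace ℝ (Fin c) →L[ℝ] EuclideanSpace ℝ (Fin c) :=
  LinearMap.toContinuousLinearMap
  { toFun := fun v => (EuclideanSpace.equiv (Fin c) ℝ).symm
      (fun i => p z i * (v i - ∑ j, p z j * v j))
    map_add' := by
      intro v w
      ext i
      show p z i * ((v + w) i - ∑ j, p z j * (v + w) j)
          = p z i * (v i - ∑ j, p z j * v j) + p z i * (w i - ∑ j, p z j * w j)
      simp only [PiLp.add_apply]
      rw [show (∑ j, p z j * (v j + w j))
          = (∑ j, p z j * v j) + ∑ j, p z j * w j from by
        rw [← Finset.sum_add_distrib]; exact Finset.sum_congr rfl fun j _ => by ring]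
      ring
    map_smul' := by
      intro a v
      ext i
      show p z i * ((a • v) i - ∑ j, p z j * (a • v) j)
          = a * (p z i * (v i - ∑ j, p z j * v j))
      simp only [PiLp.smul_apply, smul_eq_mul]
      rw [show (∑ j, p z j * (a * v j)) = a * ∑ j, p z j * v j from by
        rw [Finset.mul_sum]; exact Finset.sum_congr rfl fun j _ => by ring]
      ring }

lemma D_apply {c : ℕ} (z v : EuclideanSpace ℝ (Fin c)) (i : Fin c) :
    D z v i = p z i * (v i - ∑ j, p z j * v j) := rfl

lemma norm_D_le {c : ℕ} (z : EuclideanSpace ℝ (Fin c)) : ‖D z‖ ≤ 1 := by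
  apply ContinuousLinearMap.opNorm_le_bound _ zero_le_one
  intro v
  rw [one_mul, EuclideanSpace.norm_eq, EuclideanSpace.norm_eq]
  apply Real.sqrt_le_sqrt
  have hp0 : ∀ i, 0 ≤ p z i := fun i =>
    div_nonneg (Real.exp_pos _).le (Finset.sum_nonneg fun j _ => (Real.exp_pos _).le)
  have hps : ∑ i, p z i ≤ 1 := by
    unfold p
    rw [← Finset.sum_div]
    rcases eq_or_ne (∑ j, Real.exp (z j)) 0 with h | h
    · simp [h]
    · rw [div_self h]
  calc ∑ i, ‖D z v i‖ ^ 2 = ∑ i, (p z i * (v i - ∑ j, p z j * v j)) ^ 2 := by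
        simp only [D_apply, Real.norm_eq_abs, sq_abs]
    _ ≤ ∑ i, v i ^ 2 := key_sum _ _ hp0 hps
    _ = ∑ i, ‖v i‖ ^ 2 := by simp [sq_abs]

noncomputable def G {c : ℕ} (x : Fin c → ℝ) : (Fin c → ℝ) →L[ℝ] (Fin c → ℝ) :=
  ContinuousLinearMap.pi (fun i =>
    Real.exp (x i) • (-(((∑ j, Real.exp (x j)) ^ 2)⁻¹ •
        ∑ j, Real.exp (x j) • (ContinuousLinearMap.proj j : (Fin c → ℝ) →L[ℝ] ℝ)))
      + (∑ j, Real.exp (x j))⁻¹ •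
        (Real.exp (x i) • (ContinuousLinearMap.proj i : (Fin c → ℝ) →L[ℝ] ℝ)))

lemma hasFDerivAt_g {c : ℕ} (hc : 0 < c) (x : Fin c → ℝ) :
    HasFDerivAt (fun y : Fin c → ℝ => fun i => Real.exp (y i) / ∑ j, Real.exp (y j))
      (G x) x := by
  haveI : Nonempty (Fin c) := ⟨⟨0, hc⟩⟩
  have hSpos : 0 < ∑ j, Real.exp (x j) :=
    Finset.sum_pos (fun j _ => Real.exp_pos _) Finset.univ_nonempty
  have hsum : HasFDerivAt (fun y : Fin c → ℝ => ∑ j, Real.exp (y j))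
      (∑ j, Real.exp (x j) • (ContinuousLinearMap.proj j : (Fin c → ℝ) →L[ℝ] ℝ)) x := by
    apply HasFDerivAt.fun_sum
    intro j _
    exact (ContinuousLinearMap.proj j : (Fin c → ℝ) →L[ℝ] ℝ).hasFDerivAt.exp
  have hinv : HasFDerivAt (fun y : Fin c → ℝ => (∑ j, Real.exp (y j))⁻¹)
      (-(((∑ j, Real.exp (x j)) ^ 2)⁻¹ •
        ∑ j, Real.exp (x j) • (ContinuousLinearMap.proj j : (Fin c → ℝ) →L[ℝ] ℝ))) x := by
    have := (hasDerivAt_inv hSpos.ne').comp_hasFDerivAt x hsum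
    simpa [Function.comp_def] using this
  apply hasFDerivAt_pi''
  intro i
  have hnum : HasFDerivAt (fun y : Fin c → ℝ => Real.exp (y i))
      (Real.exp (x i) • (ContinuousLinearMap.proj i : (Fin c → ℝ) →L[ℝ] ℝ)) x :=
    (ContinuousLinearMap.proj i : (Fin c → ℝ) →L[ℝ] ℝ).hasFDerivAt.exp
  have h := hnum.fun_mul hinv
  have heq : (fun y : Fin c → ℝ => Real.exp (y i) * (∑ j, Real.exp (y j))⁻¹)
      = fun y : Fin c → ℝ => (fun i => Real.exp (y i) / ∑ j, Real.exp (y j)) i := by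
    funext y; simp [div_eq_mul_inv]
  rw [heq] at h
  exact h

lemma hasFDerivAt_softmax {c : ℕ} (hc : 0 < c) (z : EuclideanSpace ℝ (Fin c)) :
    HasFDerivAt softmax (D z) z := by
  haveI : Nonempty (Fin c) := ⟨⟨0, hc⟩⟩
  set S : ℝ := ∑ j, Real.exp (z j) with hS
  have hSpos : 0 < S := Finset.sum_pos (fun j _ => Real.exp_pos _) Finset.univ_nonempty
  set φ := PiLp.continuousLinearEquiv 2 ℝ (fun _ : Fin c => ℝ) with hφ
  have hg := hasFDerivAt_g hc (φ z)
  have hφd : HasFDerivAt (⇑φ) ((φ : EuclideanSpace ℝ (Fin c) →L[ℝ] (Fin c → ℝ))) z :=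
    (φ : EuclideanSpace ℝ (Fin c) →L[ℝ] (Fin c → ℝ)).hasFDerivAt
  have hφsd : HasFDerivAt (⇑φ.symm)
      ((φ.symm : (Fin c → ℝ) →L[ℝ] EuclideanSpace ℝ (Fin c))) (G (φ z) (φ z)) :=
    (φ.symm : (Fin c → ℝ) →L[ℝ] EuclideanSpace ℝ (Fin c)).hasFDerivAt
  have hφsd' : HasFDerivAt (⇑φ.symm)
      ((φ.symm : (Fin c → ℝ) →L[ℝ] EuclideanSpace ℝ (Fin c)))
      ((fun y : Fin c → ℝ => fun i => Real.exp (y i) / ∑ j, Real.exp (y j)) (φ z)) :=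
    (φ.symm : (Fin c → ℝ) →L[ℝ] EuclideanSpace ℝ (Fin c)).hasFDerivAt
  have h2 := hφsd'.comp z (hg.comp z hφd)
  have hfun : (⇑φ.symm ∘ (fun y : Fin c → ℝ => fun i => Real.exp (y i) / ∑ j, Real.exp (y j))
      ∘ ⇑φ) = softmax (c := c) := by
    funext x
    rfl
  rw [hfun] at h2
  refine h2.congr_fderiv ?_
  ext v i
  have hv : ∀ (w : Fin c → ℝ) (i : Fin c),
      ((φ.symm : (Fin c → ℝ) →L[ℝ] EuclideanSpace ℝ (Fin c)) w) i = w i := fun _ _ => rfl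
  have hφv : ∀ (w : EuclideanSpace ℝ (Fin c)) (i : Fin c),
      ((φ : EuclideanSpace ℝ (Fin c) →L[ℝ] (Fin c → ℝ)) w) i = w i := fun _ _ => rfl
  rw [D_apply]
  simp only [ContinuousLinearMap.comp_apply]
  rw [hv]
  have hGv : ∀ i, G (φ z) ((φ : EuclideanSpace ℝ (Fin c) →L[ℝ] (Fin c → ℝ)) v) i
      = Real.exp (z i) * -((S ^ 2)⁻¹ * ∑ j, Real.exp (z j) * v j)
        + S⁻¹ * (Real.exp (z i) * v i) := by
    intro i
    simp only [G, ContinuousLinearMap.pi_apply, ContinuousLinearMap.add_apply,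
      ContinuousLinearMap.smul_apply, ContinuousLinearMap.coe_sum', Finset.sum_apply,
      ContinuousLinearMap.proj_apply, smul_eq_mul, ContinuousLinearMap.neg_apply]
    have : ∀ j : Fin c, ((φ : EuclideanSpace ℝ (Fin c) →L[ℝ] (Fin c → ℝ)) v) j = v j :=
      fun _ => rfl
    simp only [this]
    have hz : ∀ j : Fin c, (φ z) j = z j := fun _ => rfl
    simp only [hz, ← hS]
  rw [hGv]
  have hpz : ∀ j, p z j = Real.exp (z j) / S := fun j => by unfold p; rw [← hS]
  simp only [hpz]
  have hsum2 : ∑ j, Real.exp (z j) / S * v j = (∑ j, Real.exp (z j) * v j) / S := by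
    rw [Finset.sum_div]; exact Finset.sum_congr rfl fun j _ => by ring
  rw [hsum2]
  field_simp
  ring

end SoftmaxAux

theorem softmax_lipschitz_one {c : ℕ} :
    LipschitzWith 1 (softmax (c := c)) := by
  rcases Nat.eq_zero_or_pos c with hc | hc
  · subst hc
    intro x y
    have : x = y := Subsingleton.elim x y
    simp [this]
  · rw [← lipschitzOnWith_univ]
    apply convex_univ.lipschitzOnWith_of_nnnorm_hasFDerivWithin_le
      (f' := fun z => SoftmaxAux.D z)
    · intro x _
      exact (SoftmaxAux.hasFDerivAt_softmax hc x).hasFDerivWithinAt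
    · intro x _
      rw [← NNReal.coe_le_coe, coe_nnnorm, NNReal.coe_one]
      exact SoftmaxAux.norm_D_le x
end

section
/- Under the constant-velocity optimal dynamics X(t) = X(T) + ((T−t)/λ) ∇ₓG(X(T), y) with G(·, y) convex and C¹ and λ > 0, trajectories with distinct terminal states X_T ≠ X̃_T (and the same target y) never intersect: for all t ∈ [0, T], X_T + ((T−t)/λ)∇ₓG(X_T, y) ≠ X̃_T + ((T−t)/λ)∇ₓG(X̃_T, y). -/
open Set

lemma gradient_monotone_aux {m : ℕ} (g : EuclideanSpace ℝ (Fin m) → ℝ)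
    (g' : EuclideanSpace ℝ (Fin m) → EuclideanSpace ℝ (Fin m))
    (hconv : ConvexOn ℝ Set.univ g)
    (hgrad : ∀ x, HasGradientAt g (g' x) x)
    (a b : EuclideanSpace ℝ (Fin m)) :
    (0 : ℝ) ≤ inner ℝ (g' a - g' b) (a - b) := by
  set v : EuclideanSpace ℝ (Fin m) := a - b with hv
  set A : ℝ → EuclideanSpace ℝ (Fin m) := fun s => b + s • v with hA
  have hder : ∀ s : ℝ, HasDerivAt (g ∘ A) (inner ℝ (g' (A s)) v : ℝ) s := by
    intro s
    have hAder : HasDerivAt A v s := by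
      have : HasDerivAt (fun s : ℝ => s • v) ((1:ℝ) • v) s :=
        (hasDerivAt_id s).smul_const v
      simpa [hA] using (this.const_add b)
    have hg : HasFDerivAt g (InnerProductSpace.toDual ℝ _ (g' (A s))) (A s) :=
      hgrad (A s)
    have := hg.comp_hasDerivAt s hAder
    simpa using this
  have hAeq : A = fun s => (AffineMap.lineMap b a : ℝ →ᵃ[ℝ] _) s := by
    funext s
    simp [hA, AffineMap.lineMap_apply, hv]
    module
  have hφconv : ConvexOn ℝ Set.univ (g ∘ A) := by
    rw [hAeq]
    simpa using hconv.comp_affineMap (AffineMap.lineMap b a : ℝ →ᵃ[ℝ] EuclideanSpace ℝ (Fin m))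
  have hmono := hφconv.monotoneOn_deriv (fun x _ => (hder x).differentiableAt)
  have h01 : deriv (g ∘ A) 0 ≤ deriv (g ∘ A) 1 :=
    hmono (mem_univ 0) (mem_univ 1) zero_le_one
  rw [(hder 0).deriv, (hder 1).deriv] at h01
  have hA0 : A 0 = b := by simp [hA]
  have hA1 : A 1 = a := by simp [hA, hv]
  rw [hA0, hA1] at h01
  rw [inner_sub_left]
  linarith

theorem trajectories_never_intersect {m : ℕ} (T lam : ℝ) (hlam : 0 < lam)
    (g : EuclideanSpace ℝ (Fin m) → ℝ)
    (g' : EuclideanSpace ℝ (Fin m) → EuclideanSpace ℝ (Fin m))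
    (hconv : ConvexOn ℝ Set.univ g) (hC1 : ContDiff ℝ 1 g)
    (hgrad : ∀ x, HasGradientAt g (g' x) x)
    (XT XT' : EuclideanSpace ℝ (Fin m)) (hne : XT ≠ XT')
    (t : ℝ) (ht : t ∈ Set.Icc (0 : ℝ) T) :
    XT + ((T - t) / lam) • g' XT ≠ XT' + ((T - t) / lam) • g' XT' := by
  intro heq
  set c : ℝ := (T - t) / lam with hc
  have hcnn : 0 ≤ c := div_nonneg (by linarith [ht.2]) hlam.le
  have hkey : XT - XT' = -(c • (g' XT - g' XT')) := by
    have : XT + c • g' XT = XT' + c • g' XT' := heq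
    rw [smul_sub]
    abel_nf
    linear_combination (norm := module) this
  have hmono := gradient_monotone_aux g g' hconv hgrad XT XT'
  have hnorm : (0:ℝ) < ‖XT - XT'‖^2 := by
    have h0 : XT - XT' ≠ 0 := sub_ne_zero.mpr hne
    have := norm_pos_iff.mpr h0
    positivity
  have h1 : (inner ℝ (XT - XT') (XT - XT') : ℝ)
      = -(c * inner ℝ (g' XT - g' XT') (XT - XT')) := by
    nth_rewrite 1 [hkey]
    rw [inner_neg_left, real_inner_smul_left]
  have h2 : ‖XT - XT'‖^2 = (inner ℝ (XT - XT') (XT - XT') : ℝ) :=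
    (real_inner_self_eq_norm_sq _).symm
  have hmono := gradient_monotone_aux g g' hconv hgrad XT XT'
  nlinarith [mul_nonneg hcnn hmono]
end
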